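/- Let F be a field with a valuation v, and let K ⊆ K' and K ⊆ L be subfields of F. Assume that the extension L/K is vs-defectless, that Γ(L) ∩ Γ(K') = Γ(K), and that the residue field k(L) is linearly disjoint from k(K') over k(K) inside the residue field of F. Let LK' denote the subfield of F generated by L ∪ K'. Then k(LK') is the field compositum of k(L) and k(K') inside the residue field of F, i.e., res(O_{LK'}) is the subfield of k_F generated by k(L) ∪ k(K'). -/

import Mathlib

open scoped Pointwise

/-- Linear independence of a finite family over a subset `E` of a commutative ring: no
nontrivial linear combination with coefficients in `E` vanishes. -/
def LinIndepOver {R : Type*} [CommRing R] (E : Set R) {n : ℕ} (b : Fin n → R) : Prop :=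
  ∀ c : Fin n → R, (∀ i, c i ∈ E) → (∑ i, c i * b i) = 0 → ∀ i, c i = 0

variable {F Γ₀ : Type*} [Field F] [LinearOrderedCommGroupWithZero Γ₀]

/-- A finite family `b` of elements of `F` is `E`-valuation independent:
`v(∑ cᵢ bᵢ) = minᵢ v(cᵢ bᵢ)` for all coefficients `cᵢ ∈ E`.  (In Mathlib's multiplicative
convention for valuations, the additive `min` becomes the multiplicative `sup`, and the additive
`∞` becomes `0`.) -/
def ValIndep (v : Valuation F Γ₀) (E : Set F) {n : ℕ} (b : Fin n → F) : Prop :=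
  letI : OrderBot Γ₀ := { bot := 0, bot_le := fun _ => zero_le' }
  ∀ c : Fin n → F, (∀ i, c i ∈ E) →
    v (∑ i, c i * b i) = Finset.univ.sup fun i => v (c i * b i)

/-- The `E`-linear span (inside `F`) of a subset `s ⊆ F`, for `E ⊆ F`. -/
def SpanOver (E s : Set F) : Set F :=
  {y | ∃ (n : ℕ) (c t : Fin n → F),
    (∀ i, c i ∈ E) ∧ (∀ i, t i ∈ s) ∧ y = ∑ i, c i * t i}

/-- The extension `L/E` is vs-defectless: every finite-dimensional `E`-vector subspace of `L`
admits an `E`-basis which is `E`-valuation independent. -/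
def VsDefectless (v : Valuation F Γ₀) (E L : Set F) : Prop :=
  ∀ (n : ℕ) (x : Fin n → F), (∀ i, x i ∈ L) →
    ∃ (m : ℕ) (b : Fin m → F),
      ValIndep v E b ∧ LinIndepOver E b ∧
        SpanOver E (Set.range b) = SpanOver E (Set.range x)

/-- The value group `Γ(E) = v(E∖{0})` of a subset `E ⊆ F`, as a subset of `Γ₀`. -/
def ValueGroupSet (v : Valuation F Γ₀) (E : Set F) : Set Γ₀ :=
  v '' (E \ {0})

/-- The residue field `k_F = O_F/m_F` of the valued field `(F, v)`. -/
abbrev ResField (v : Valuation F Γ₀) : Type _ :=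
  IsLocalRing.ResidueField v.valuationSubring

/-- The image `k(E) = res(O_E)` of a subset `E ⊆ F` in the residue field of `(F, v)`. -/
def ResidueSet (v : Valuation F Γ₀) (E : Set F) : Set (ResField v) :=
  {y | ∃ x : v.valuationSubring, (x : F) ∈ E ∧ IsLocalRing.residue _ x = y}

namespace Aux12


variable (v : Valuation F Γ₀)

theorem isUnit_iff_val (x : v.valuationSubring) : IsUnit x ↔ v x = 1 := by
  constructor
  · intro h
    obtain ⟨y, hy⟩ := h.exists_right_inv
    have h3 : (x : F) * (y : F) = 1 := by exact_mod_cast congrArg (Subtype.val) hy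
    have := congrArg v h3
    rw [v.map_mul, v.map_one] at this
    exact le_antisymm x.2 (by
      by_contra h
      push_neg at h
      have := this ▸ mul_lt_one_of_lt_of_le h y.2
      simp at this)
  · intro h
    have hinv : v (x : F)⁻¹ ≤ 1 := by
      rw [map_inv₀, h]; simp
    refine IsUnit.of_mul_eq_one (a := x) ⟨(x : F)⁻¹, hinv⟩ ?_
    have hx0 : (x : F) ≠ 0 := by
      intro h0
      rw [h0] at h; simp at h
    ext
    push_cast
    field_simp

theorem residue_zero_iff (x : v.valuationSubring) :
    IsLocalRing.residue _ x = 0 ↔ v x < 1 := by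
  rw [IsLocalRing.residue_eq_zero_iff, IsLocalRing.mem_maximalIdeal, mem_nonunits_iff,
    isUnit_iff_val]
  exact ⟨lt_of_le_of_ne x.2, ne_of_lt⟩

theorem mem_residueSet_of (E : Set F) {x : F} (hx : x ∈ E) (hv : v x ≤ 1) :
    IsLocalRing.residue _ (⟨x, hv⟩ : v.valuationSubring) ∈ ResidueSet v E :=
  ⟨⟨x, hv⟩, hx, rfl⟩

theorem residueSet_mono {E E' : Set F} (h : E ⊆ E') :
    ResidueSet v E ⊆ ResidueSet v E' := by
  rintro y ⟨x, hx, rfl⟩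
  exact ⟨x, h hx, rfl⟩

/-- `k(E)` is a subfield of `k_F` when `E` is a subfield of `F`. -/
def residueSubfield (E : Subfield F) : Subfield (ResField v) where
  carrier := ResidueSet v (E : Set F)
  zero_mem' := ⟨0, by simpa using zero_mem E, map_zero _⟩
  one_mem' := ⟨1, by simpa using one_mem E, map_one _⟩
  add_mem' := by
    rintro a b ⟨x, hx, rfl⟩ ⟨y, hy, rfl⟩
    exact ⟨x + y, by push_cast; exact add_mem hx hy, map_add _ _ _⟩
  mul_mem' := by
    rintro a b ⟨x, hx, rfl⟩ ⟨y, hy, rfl⟩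
    exact ⟨x * y, by push_cast; exact mul_mem hx hy, map_mul _ _ _⟩
  neg_mem' := by
    rintro a ⟨x, hx, rfl⟩
    exact ⟨-x, by push_cast; exact neg_mem hx, map_neg _ _⟩
  inv_mem' := by
    rintro a ⟨x, hx, rfl⟩
    rcases eq_or_ne (IsLocalRing.residue _ x) 0 with h0 | h0
    · rw [h0, inv_zero]
      exact ⟨0, by simpa using zero_mem E, map_zero _⟩
    have hv1 : v (x : F) = 1 := by
      rcases lt_or_eq_of_le x.2 with h | h
      · exact absurd ((residue_zero_iff v x).2 h) h0
      · exact h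
    have hx0 : (x : F) ≠ 0 := fun h => by rw [h] at hv1; simp at hv1
    have hvinv : v (x : F)⁻¹ ≤ 1 := by rw [map_inv₀, hv1]; simp
    refine ⟨⟨(x : F)⁻¹, hvinv⟩, inv_mem hx, ?_⟩
    have hmul : x * (⟨(x : F)⁻¹, hvinv⟩ : v.valuationSubring) = 1 := by
      ext; push_cast; field_simp
    have := congrArg (IsLocalRing.residue v.valuationSubring) hmul
    rw [map_mul, map_one] at this
    exact eq_inv_of_mul_eq_one_right this

theorem coe_residueSubfield (E : Subfield F) :
    (residueSubfield v E : Set (ResField v)) = ResidueSet v (E : Set F) := rfl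




variable (K' L : Subfield F)

theorem zero_mem_spanOver (E s : Set F) : (0 : F) ∈ SpanOver E s :=
  ⟨0, ![], ![], by simp, by simp, by simp⟩

theorem mem_spanOver_of_mem {E s : Set F} (h1 : (1:F) ∈ E) {x : F} (hx : x ∈ s) :
    x ∈ SpanOver E s :=
  ⟨1, ![1], ![x], by simp [h1], by simp [hx], by simp⟩

theorem add_mem_spanOver {E s : Set F} {x y : F}
    (hx : x ∈ SpanOver E s) (hy : y ∈ SpanOver E s) : x + y ∈ SpanOver E s := by
  obtain ⟨n, c, t, hc, ht, rfl⟩ := hx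
  obtain ⟨m, d, u, hd, hu, rfl⟩ := hy
  refine ⟨n + m, Fin.append c d, Fin.append t u, ?_, ?_, ?_⟩
  · intro i
    refine Fin.addCases (fun j => ?_) (fun j => ?_) i <;>
      simp [Fin.append_left, Fin.append_right, hc, hd]
  · intro i
    refine Fin.addCases (fun j => ?_) (fun j => ?_) i <;>
      simp [Fin.append_left, Fin.append_right, ht, hu]
  · rw [Fin.sum_univ_add]
    simp [Fin.append_left, Fin.append_right]

theorem neg_mem_spanOver {E : Set F} (hE : ∀ x ∈ E, -x ∈ E) {s : Set F} {x : F}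
    (hx : x ∈ SpanOver E s) : -x ∈ SpanOver E s := by
  obtain ⟨n, c, t, hc, ht, rfl⟩ := hx
  exact ⟨n, fun i => -c i, t, fun i => hE _ (hc i), ht, by
    rw [← Finset.sum_neg_distrib]
    exact Finset.sum_congr rfl fun i _ => by ring⟩

/-- `S := SpanOver K' L` is closed under multiplication. -/
theorem mul_mem_spanOver {x y : F}
    (hx : x ∈ SpanOver (K' : Set F) (L : Set F)) (hy : y ∈ SpanOver (K' : Set F) (L : Set F)) :
    x * y ∈ SpanOver (K' : Set F) (L : Set F) := by
  obtain ⟨n, c, t, hc, ht, rfl⟩ := hx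
  obtain ⟨m, d, u, hd, hu, rfl⟩ := hy
  refine ⟨n * m, fun k => c (finProdFinEquiv.symm k).1 * d (finProdFinEquiv.symm k).2,
    fun k => t (finProdFinEquiv.symm k).1 * u (finProdFinEquiv.symm k).2,
    fun k => mul_mem (hc _) (hd _), fun k => mul_mem (ht _) (hu _), ?_⟩
  have h := Equiv.sum_comp (finProdFinEquiv (m := n) (n := m)).symm
      (fun p : Fin n × Fin m => c p.1 * d p.2 * (t p.1 * u p.2))
  rw [Finset.sum_mul_sum]
  beta_reduce
  rw [h, Fintype.sum_prod_type]
  exact Finset.sum_congr rfl fun i _ => Finset.sum_congr rfl fun j _ => by ring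

/-- Representation of a span element over the range of a finite family, when `E` is a subfield. -/
theorem spanOver_range_repr (E : Subfield F) {p : ℕ} (b : Fin p → F) {y : F}
    (hy : y ∈ SpanOver (E : Set F) (Set.range b)) :
    ∃ coef : Fin p → F, (∀ k, coef k ∈ E) ∧ y = ∑ k, coef k * b k := by
  obtain ⟨n, c, t, hc, ht, rfl⟩ := hy
  choose ι hι using ht
  refine ⟨fun k => ∑ l, if ι l = k then c l else 0,
    fun k => by simp only [SetLike.mem_coe]; exact sum_mem fun l _ => by split <;> [exact hc l; exact zero_mem E], ?_⟩
  rw [Finset.sum_congr rfl fun k _ => Finset.sum_mul .., Finset.sum_comm]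
  refine Finset.sum_congr rfl fun l _ => ?_
  rw [Finset.sum_congr rfl fun k (_ : k ∈ Finset.univ) => (ite_zero_mul _ _ _ : _ = ite (ι l = k) (c l * b k) 0)]
  rw [Finset.sum_ite_eq Finset.univ (ι l) (fun k => c l * b k)]
  simp [hι l]

/-- quotients of elements of `S = SpanOver K' L` form a subfield. -/
def quotSpan : Subfield F where
  carrier := {x | ∃ f ∈ SpanOver (K' : Set F) (L : Set F),
    ∃ g ∈ SpanOver (K' : Set F) (L : Set F), g ≠ 0 ∧ x * g = f}
  zero_mem' := ⟨0, zero_mem_spanOver _ _, 1, mem_spanOver_of_mem (one_mem K') (one_mem L),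
    one_ne_zero, by simp⟩
  one_mem' := ⟨1, mem_spanOver_of_mem (one_mem K') (one_mem L), 1,
    mem_spanOver_of_mem (one_mem K') (one_mem L), one_ne_zero, by simp⟩
  add_mem' := by
    rintro a b ⟨f, hf, g, hg, hg0, hfg⟩ ⟨f', hf', g', hg', hg0', hfg'⟩
    refine ⟨f * g' + f' * g, add_mem_spanOver (mul_mem_spanOver _ _ hf hg')
      (mul_mem_spanOver _ _ hf' hg), g * g', mul_mem_spanOver _ _ hg hg',
      mul_ne_zero hg0 hg0', ?_⟩
    rw [← hfg, ← hfg']; ring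
  mul_mem' := by
    rintro a b ⟨f, hf, g, hg, hg0, hfg⟩ ⟨f', hf', g', hg', hg0', hfg'⟩
    refine ⟨f * f', mul_mem_spanOver _ _ hf hf', g * g', mul_mem_spanOver _ _ hg hg',
      mul_ne_zero hg0 hg0', ?_⟩
    rw [← hfg, ← hfg']; ring
  neg_mem' := by
    rintro a ⟨f, hf, g, hg, hg0, hfg⟩
    exact ⟨-f, neg_mem_spanOver (fun x hx => neg_mem hx) hf, g, hg, hg0, by rw [← hfg]; ring⟩
  inv_mem' := by
    rintro a ⟨f, hf, g, hg, hg0, hfg⟩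
    rcases eq_or_ne a 0 with rfl | ha
    · exact ⟨0, zero_mem_spanOver _ _, 1, mem_spanOver_of_mem (one_mem K') (one_mem L),
        one_ne_zero, by simp⟩
    · have hf0 : f ≠ 0 := by
        rw [← hfg]; exact mul_ne_zero ha hg0
      exact ⟨g, hg, f, hf, hf0, by rw [← hfg]; field_simp⟩

theorem mem_quotSpan_of_sup {x : F} (hx : x ∈ L ⊔ K') : x ∈ quotSpan K' L := by
  refine (sup_le (fun y hy => ?_) (fun y hy => ?_) : L ⊔ K' ≤ quotSpan K' L) hx
  · exact ⟨y, mem_spanOver_of_mem (one_mem K') hy, 1,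
      mem_spanOver_of_mem (one_mem K') (one_mem L), one_ne_zero, by simp⟩
  · exact ⟨y, ⟨1, ![y], ![1], by simp [hy], by simpa using one_mem L, by simp⟩, 1,
      mem_spanOver_of_mem (one_mem K') (one_mem L), one_ne_zero, by simp⟩




variable (v : Valuation F Γ₀) (K K' L : Subfield F)

theorem mem_valueGroupSet {E : Subfield F} {x : F} (hx : x ∈ E) (hx0 : x ≠ 0) :
    v x ∈ ValueGroupSet v (E : Set F) :=
  ⟨x, ⟨hx, hx0⟩, rfl⟩

theorem exists_val_K (hΓ : ValueGroupSet v (L : Set F) ∩ ValueGroupSet v (K' : Set F)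
      = ValueGroupSet v (K : Set F))
    {γ : Γ₀} (h1 : γ ∈ ValueGroupSet v (L : Set F)) (h2 : γ ∈ ValueGroupSet v (K' : Set F)) :
    ∃ e : F, e ∈ K ∧ e ≠ 0 ∧ v e = γ := by
  have : γ ∈ ValueGroupSet v (K : Set F) := hΓ ▸ ⟨h1, h2⟩
  obtain ⟨e, ⟨heK, he0⟩, hve⟩ := this
  exact ⟨e, heK, by simpa using he0, hve⟩

/-- Factorization: if `v (t * b₁) = v (c₀ * b₀)` with `t, c₀ ∈ K'∖0`, `b₁, b₀ ∈ L∖0`, then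
`t * b₁ = (c₀ * b₀) * (w * u)` with `w ∈ K'`, `u ∈ L` both of valuation one. -/
theorem exists_unit_factor (hKK' : K ≤ K') (hKL : K ≤ L)
    (hΓ : ValueGroupSet v (L : Set F) ∩ ValueGroupSet v (K' : Set F)
      = ValueGroupSet v (K : Set F))
    {t c₀ b₁ b₀ : F} (ht : t ∈ K') (hc₀ : c₀ ∈ K') (hb₁ : b₁ ∈ L) (hb₀ : b₀ ∈ L)
    (ht0 : t ≠ 0) (hc0 : c₀ ≠ 0) (hb10 : b₁ ≠ 0) (hb00 : b₀ ≠ 0)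
    (hv : v (t * b₁) = v (c₀ * b₀)) :
    ∃ e u w : F, e ∈ K ∧ e ≠ 0 ∧ u = b₁ / (e * b₀) ∧ w = t * e / c₀ ∧
      v e = v b₁ / v b₀ ∧ u ∈ L ∧ w ∈ K' ∧ v u = 1 ∧ v w = 1 ∧
      t * b₁ = (c₀ * b₀) * (w * u) := by
  have vt0 : v t ≠ 0 := v.ne_zero_iff.2 ht0
  have vc0 : v c₀ ≠ 0 := v.ne_zero_iff.2 hc0
  have vb10 : v b₁ ≠ 0 := v.ne_zero_iff.2 hb10
  have vb00 : v b₀ ≠ 0 := v.ne_zero_iff.2 hb00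
  rw [v.map_mul, v.map_mul] at hv
  have hγL : v b₁ / v b₀ ∈ ValueGroupSet v (L : Set F) := by
    have := mem_valueGroupSet v (E := L) (div_mem hb₁ hb₀) (div_ne_zero hb10 hb00)
    rwa [map_div₀] at this
  have hγK' : v b₁ / v b₀ ∈ ValueGroupSet v (K' : Set F) := by
    have heq : v b₁ / v b₀ = v c₀ / v t := by
      rw [div_eq_div_iff vb00 vt0, mul_comm (v b₁) (v t), hv, mul_comm]
    rw [heq, ← map_div₀]
    exact mem_valueGroupSet v (E := K') (div_mem hc₀ ht) (div_ne_zero hc0 ht0)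
  obtain ⟨e, heK, he0, hve⟩ := exists_val_K v K K' L hΓ hγL hγK'
  have ve0 : v e ≠ 0 := v.ne_zero_iff.2 he0
  refine ⟨e, b₁ / (e * b₀), t * e / c₀, heK, he0, rfl, rfl, hve,
    div_mem hb₁ (mul_mem (hKL heK) hb₀),
    div_mem (mul_mem ht (hKK' heK)) hc₀, ?_, ?_, ?_⟩
  · rw [map_div₀, v.map_mul, hve, div_mul_cancel₀ _ vb00, div_self vb10]
  · rw [map_div₀, v.map_mul, hve, ← mul_div_assoc, hv,
      mul_div_cancel_right₀ _ vb00, div_self vc0]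
  · field_simp


variable (v : Valuation F Γ₀)

theorem valIndep_extend (K K' L : Subfield F) (hKK' : K ≤ K') (hKL : K ≤ L)
    (hΓ : ValueGroupSet v (L : Set F) ∩ ValueGroupSet v (K' : Set F)
      = ValueGroupSet v (K : Set F))
    (hres : ∀ (n : ℕ) (x : Fin n → ResField v),
        (∀ i, x i ∈ ResidueSet v (L : Set F)) →
        LinIndepOver (ResidueSet v (K : Set F)) x →
        LinIndepOver (ResidueSet v (K' : Set F)) x)
    {n : ℕ} (b : Fin n → F) (hbL : ∀ i, b i ∈ L)
    (hb : ValIndep v (K : Set F) b) : ValIndep v (K' : Set F) b := by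
  letI : OrderBot Γ₀ := { bot := 0, bot_le := fun _ => zero_le' }
  intro c hc
  set M := Finset.univ.sup (fun i => v (c i * b i)) with hM
  have hterm_le : ∀ i, v (c i * b i) ≤ M := fun i => by
    rw [hM]; exact Finset.le_sup (f := fun i => v (c i * b i)) (Finset.mem_univ i)
  have hle : v (∑ i, c i * b i) ≤ M := v.map_sum_le fun i _ => hterm_le i
  rcases eq_or_ne M 0 with hM0 | hM0
  · have hz : ∀ i, c i * b i = 0 := fun i =>
      v.zero_iff.1 (le_antisymm (hM0 ▸ hterm_le i) zero_le')
    rw [Finset.sum_congr rfl fun i _ => hz i, hM0]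
    simp
  rcases eq_or_ne (v (∑ i, c i * b i)) M with h | h
  · exact h
  exfalso
  have hlt : v (∑ i, c i * b i) < M := lt_of_le_of_ne hle h
  have hne : (Finset.univ : Finset (Fin n)).Nonempty := by
    by_contra hemp
    rw [Finset.not_nonempty_iff_eq_empty] at hemp
    exact hM0 (by rw [hM, hemp, Finset.sup_empty]; rfl)
  obtain ⟨i₀, _, hi₀⟩ := Finset.exists_mem_eq_sup Finset.univ hne (fun i => v (c i * b i))
  set S := Finset.univ.filter (fun i => v (c i * b i) = M) with hSdef
  have hi₀S : i₀ ∈ S := Finset.mem_filter.2 ⟨Finset.mem_univ _, hi₀.symm⟩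
  have hSval : ∀ i ∈ S, v (c i * b i) = M := fun i hi => (Finset.mem_filter.1 hi).2
  have hcb0 : ∀ i ∈ S, c i ≠ 0 ∧ b i ≠ 0 := by
    intro i hi
    have hvi : v (c i * b i) ≠ 0 := (hSval i hi) ▸ hM0
    rw [v.map_mul] at hvi
    exact ⟨fun h0 => hvi (by simp [h0]), fun h0 => hvi (by simp [h0])⟩
  have hc0 : c i₀ ≠ 0 := (hcb0 i₀ hi₀S).1
  have hb0 : b i₀ ≠ 0 := (hcb0 i₀ hi₀S).2
  have hfac : ∀ i, ∃ e u w : F, e ∈ K ∧ (i ∈ S →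
      e ≠ 0 ∧ u = b i / (e * b i₀) ∧ w = c i * e / c i₀ ∧
      v e = v (b i) / v (b i₀) ∧ u ∈ L ∧ w ∈ K' ∧ v u = 1 ∧ v w = 1 ∧
      c i * b i = (c i₀ * b i₀) * (w * u)) := by
    intro i
    by_cases hi : i ∈ S
    · obtain ⟨e, u, w, heK, h2⟩ :=
        exists_unit_factor v K K' L hKK' hKL hΓ (hc i) (hc i₀) (hbL i) (hbL i₀)
          (hcb0 i hi).1 hc0 (hcb0 i hi).2 hb0
          (by rw [hSval i hi, hSval i₀ hi₀S])
      exact ⟨e, u, w, heK, fun _ => h2⟩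
    · exact ⟨1, 1, 1, one_mem K, fun h => absurd h hi⟩
  choose e u w heK hfacS using hfac
  -- enumeration of S
  set s := S.card with hs
  set σ : Fin s → Fin n := fun k => S.orderEmbOfFin rfl k with hσ
  have hmem : ∀ k, σ k ∈ S := fun k => Finset.orderEmbOfFin_mem S rfl k
  have hσinj : Function.Injective σ := (S.orderEmbOfFin rfl).injective
  have himage : Finset.univ.image σ = S := by
    apply Finset.coe_injective
    rw [Finset.coe_image, Finset.coe_univ, Set.image_univ]
    exact Finset.range_orderEmbOfFin S rfl
  have hsum_transfer : ∀ f : Fin n → F, ∑ i ∈ S, f i = ∑ k, f (σ k) := by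
    intro f
    rw [← himage, Finset.sum_image (fun a _ a' _ h => hσinj h)]
  -- the residue family
  have hu1 : ∀ k, v (u (σ k)) = 1 := fun k => (hfacS (σ k) (hmem k)).2.2.2.2.2.2.1
  have hw1 : ∀ k, v (w (σ k)) = 1 := fun k => (hfacS (σ k) (hmem k)).2.2.2.2.2.2.2.1
  have huL : ∀ k, u (σ k) ∈ L := fun k => (hfacS (σ k) (hmem k)).2.2.2.2.1
  have hwK' : ∀ k, w (σ k) ∈ K' := fun k => (hfacS (σ k) (hmem k)).2.2.2.2.2.1
  set U : Fin s → v.valuationSubring := fun k => ⟨u (σ k), le_of_eq (hu1 k)⟩ with hU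
  set W : Fin s → v.valuationSubring := fun k => ⟨w (σ k), le_of_eq (hw1 k)⟩ with hW
  set x : Fin s → ResField v := fun k => IsLocalRing.residue _ (U k) with hx
  have hxL : ∀ k, x k ∈ ResidueSet v (L : Set F) := fun k => ⟨U k, huL k, rfl⟩
  -- Claim A : the residues are linearly independent over k(K)
  have claimA : LinIndepOver (ResidueSet v (K : Set F)) x := by
    intro δ hδ hsum0 k'
    by_contra hk'
    choose D hDK hDres using hδ
    have hvD : v (D k') = 1 := by
      rcases lt_or_eq_of_le (D k').2 with hlt1 | heq1
      · exact absurd ((hDres k') ▸ (residue_zero_iff v (D k')).2 hlt1) hk'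
      · exact heq1
    -- the small sum has valuation < 1
    have hres0 : IsLocalRing.residue _ (∑ k, D k * U k) = 0 := by
      rw [map_sum]
      rw [Finset.sum_congr rfl fun k _ => (map_mul _ _ _)]
      rw [Finset.sum_congr rfl fun k _ => by rw [hDres k]]
      exact hsum0
    have hvDU : v (∑ k, (D k : F) * u (σ k)) < 1 := by
      have := (residue_zero_iff v _).1 hres0
      have hcoe : ((∑ k, D k * U k : v.valuationSubring) : F)
          = ∑ k, (D k : F) * u (σ k) := by push_cast; rfl
      rwa [hcoe] at this
    -- build K-coefficients
    set γ : Fin n → F := fun i => ∑ k, if σ k = i then (D k : F) / e i else 0 with hγ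
    have hγK : ∀ i, γ i ∈ (K : Set F) := by
      intro i
      simp only [SetLike.mem_coe, hγ]
      exact sum_mem fun k _ => by
        split
        · exact div_mem (hDK k) (heK i)
        · exact zero_mem K
    have hγsum : ∑ i, γ i * b i = b i₀ * ∑ k, (D k : F) * u (σ k) := by
      simp only [hγ]
      rw [Finset.sum_congr rfl fun i _ => Finset.sum_mul ..]
      rw [Finset.sum_comm]
      rw [Finset.mul_sum]
      refine Finset.sum_congr rfl fun k _ => ?_
      rw [Finset.sum_congr rfl fun i (_ : i ∈ Finset.univ) =>
        (ite_zero_mul _ _ _ : _ = ite (σ k = i) ((D k : F) / e i * b i) 0)]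
      rw [Finset.sum_ite_eq Finset.univ (σ k) (fun i => (D k : F) / e i * b i)]
      simp only [Finset.mem_univ, if_true]
      obtain ⟨he0, hu_eq, -, -, -, -, -, -, -⟩ := hfacS (σ k) (hmem k)
      rw [hu_eq]
      field_simp
    have hval := hb γ hγK
    have hup : v (∑ i, γ i * b i) < v (b i₀) := by
      rw [hγsum, v.map_mul]
      calc v (b i₀) * v (∑ k, (D k : F) * u (σ k)) < v (b i₀) * 1 := by
            exact mul_lt_mul_of_pos_left hvDU (zero_lt_iff.2 (v.ne_zero_iff.2 hb0))
        _ = v (b i₀) := mul_one _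
    have hdown : v (b i₀) ≤ Finset.univ.sup fun i => v (γ i * b i) := by
      have hγk' : γ (σ k') = (D k' : F) / e (σ k') := by
        simp only [hγ]
        rw [Finset.sum_eq_single k']
        · simp
        · intro k _ hkk'
          rw [if_neg (fun h => hkk' (hσinj h))]
        · intro hmem'; exact absurd (Finset.mem_univ k') hmem'
      have heval : v (γ (σ k') * b (σ k')) = v (b i₀) := by
        obtain ⟨he0, -, -, hve, -, -, -, -, -⟩ := hfacS (σ k') (hmem k')
        have hbσ : v (b (σ k')) ≠ 0 := v.ne_zero_iff.2 (hcb0 _ (hmem k')).2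
        rw [hγk', v.map_mul, map_div₀, hvD, hve, one_div, inv_div, div_mul_eq_mul_div,
          mul_div_cancel_right₀ _ hbσ]
      calc v (b i₀) = v (γ (σ k') * b (σ k')) := heval.symm
        _ ≤ _ := Finset.le_sup (f := fun i => v (γ i * b i)) (Finset.mem_univ (σ k'))
    have hge : v (b i₀) ≤ v (∑ i, γ i * b i) := by rw [hval]; exact hdown
    exact absurd hup (not_lt.2 hge)
  -- now use hres to get independence over k(K')
  have claimB := hres s x hxL claimA
  -- apply to the residues of the w's
  have hWres : ∀ k, IsLocalRing.residue _ (W k) = 0 := by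
    refine claimB (fun k => IsLocalRing.residue _ (W k)) (fun k => ⟨W k, hwK' k, rfl⟩) ?_
    have hvWU : v (∑ k, (w (σ k)) * u (σ k)) < 1 := by
      have hWU : ∑ k, w (σ k) * u (σ k) = (∑ i ∈ S, c i * b i) / (c i₀ * b i₀) := by
        rw [hsum_transfer, Finset.sum_div]
        refine Finset.sum_congr rfl fun k _ => ?_
        obtain ⟨-, -, -, -, -, -, -, -, hfact⟩ := hfacS (σ k) (hmem k)
        rw [hfact]
        field_simp
      have hvS : v (∑ i ∈ S, c i * b i) < M := by
        have hsplit : ∑ i ∈ S, c i * b i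
            = (∑ i, c i * b i) - ∑ i ∈ Finset.univ.filter (fun i => ¬ v (c i * b i) = M),
              c i * b i := by
          rw [eq_sub_iff_add_eq, hSdef]
          exact Finset.sum_filter_add_sum_filter_not _ _ _
        rw [hsplit]
        refine lt_of_le_of_lt (v.map_sub _ _) (max_lt hlt ?_)
        refine v.map_sum_lt hM0 fun i hi => ?_
        exact lt_of_le_of_ne (hterm_le i) (Finset.mem_filter.1 hi).2
      rw [hWU, map_div₀, v.map_mul]
      have hMeq : v (c i₀) * v (b i₀) = M := by
        rw [← v.map_mul]; exact hSval i₀ hi₀S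
      rw [hMeq]
      rw [div_eq_mul_inv]
      exact mul_inv_lt_of_lt_mul₀ (by rwa [one_mul])
    have hcoe : ((∑ k, W k * U k : v.valuationSubring) : F)
        = ∑ k, (w (σ k)) * u (σ k) := by push_cast; rfl
    rw [Finset.sum_congr rfl fun k _ => (map_mul (IsLocalRing.residue _) (W k) (U k)).symm,
      ← map_sum]
    exact (residue_zero_iff v _).2 (by rw [hcoe]; exact hvWU)
  -- contradiction: w i₀ has valuation 1
  obtain ⟨k₀, -, hk₀⟩ := Finset.mem_image.1 (himage ▸ hi₀S)
  have := (residue_zero_iff v (W k₀)).1 (hWres k₀)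
  rw [hW] at this
  simp only at this
  rw [hw1 k₀] at this
  exact absurd this (lt_irrefl 1)


variable (v : Valuation F Γ₀)

theorem div_le_one_of_le {a b : Γ₀} (h : a ≤ b) (hb : b ≠ 0) : a / b ≤ 1 := by
  rw [div_eq_mul_inv]
  calc a * b⁻¹ ≤ b * b⁻¹ := mul_le_mul_left h _
    _ = 1 := mul_inv_cancel₀ hb

theorem spanOver_subset {E s : Set F} (L : Subfield F) (hE : E ⊆ L) (hs : s ⊆ L) :
    SpanOver E s ⊆ (L : Set F) := by
  rintro y ⟨n, c, t, hc, ht, rfl⟩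
  simp only [SetLike.mem_coe]
  exact sum_mem fun i _ => mul_mem (hE (hc i)) (hs (ht i))

/-- The residue of a quotient `(∑ Aₖ bₖ) / (c₀ b₀)` lies in the compositum of `k(L)`, `k(K')`. -/
theorem res_quot_mem (K K' L : Subfield F) (hKK' : K ≤ K') (hKL : K ≤ L)
    (hΓ : ValueGroupSet v (L : Set F) ∩ ValueGroupSet v (K' : Set F)
      = ValueGroupSet v (K : Set F))
    {p : ℕ} (b : Fin p → F) (hbL : ∀ k, b k ∈ L) (A : Fin p → F) (hA : ∀ k, A k ∈ K')
    {c₀ b₀ : F} (hc₀ : c₀ ∈ K') (hb₀ : b₀ ∈ L) (hc00 : c₀ ≠ 0) (hb00 : b₀ ≠ 0)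
    (hle : ∀ k, v (A k * b k) ≤ v (c₀ * b₀))
    (h : v ((∑ k, A k * b k) / (c₀ * b₀)) ≤ 1) :
    IsLocalRing.residue _ (⟨(∑ k, A k * b k) / (c₀ * b₀), h⟩ : v.valuationSubring)
      ∈ Subfield.closure (ResidueSet v (L : Set F) ∪ ResidueSet v (K' : Set F)) := by
  have hcb0 : v (c₀ * b₀) ≠ 0 := v.ne_zero_iff.2 (mul_ne_zero hc00 hb00)
  have hterm : ∀ k, v (A k * b k / (c₀ * b₀)) ≤ 1 := fun k => by
    rw [map_div₀]; exact div_le_one_of_le (hle k) hcb0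
  set Term : Fin p → v.valuationSubring := fun k => ⟨A k * b k / (c₀ * b₀), hterm k⟩ with hT
  have hsum : (⟨(∑ k, A k * b k) / (c₀ * b₀), h⟩ : v.valuationSubring) = ∑ k, Term k := by
    ext
    push_cast
    rw [Finset.sum_div]
  rw [hsum, map_sum]
  refine sum_mem fun k _ => ?_
  rcases eq_or_ne (A k * b k) 0 with h0 | h0
  · have : Term k = 0 := by ext; simp [hT, h0]
    rw [this, map_zero]
    exact zero_mem _
  rcases lt_or_eq_of_le (hterm k) with hlt1 | heq1
  · rw [(residue_zero_iff v (Term k)).2 hlt1]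
    exact zero_mem _
  · -- valuation exactly one : factor
    have hA0 : A k ≠ 0 := fun hh => h0 (by simp [hh])
    have hb0 : b k ≠ 0 := fun hh => h0 (by simp [hh])
    have hveq : v (A k * b k) = v (c₀ * b₀) := by
      rw [map_div₀] at heq1
      have h2 := congrArg (· * v (c₀ * b₀)) heq1
      rw [div_mul_cancel₀ _ hcb0, one_mul] at h2
      exact h2
    obtain ⟨e, uu, ww, -, -, -, -, -, huL, hwK', hu1, hw1, hfact⟩ :=
      exists_unit_factor v K K' L hKK' hKL hΓ (hA k) hc₀ (hbL k) hb₀ hA0 hc00 hb0 hb00 hveq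
    have hTval : Term k = (⟨ww, le_of_eq hw1⟩ : v.valuationSubring) * ⟨uu, le_of_eq hu1⟩ := by
      ext
      simp only [hT]
      push_cast
      rw [hfact]
      field_simp
    rw [hTval, map_mul]
    exact mul_mem
      (Subfield.subset_closure (Set.mem_union_right _ ⟨_, hwK', rfl⟩))
      (Subfield.subset_closure (Set.mem_union_left _ ⟨_, huL, rfl⟩))

end Aux12

open Aux12

/-- Under the hypotheses of valuative disjointness, the residue field of the
compositum `LK'` is the field compositum of the residue fields: `k(LK')` is the subfield of
`k_F` generated by `k(L) ∪ k(K')`. -/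
theorem residueField_of_compositum
    (F Γ₀ : Type*) [Field F] [LinearOrderedCommGroupWithZero Γ₀]
    (v : Valuation F Γ₀)
    (K K' L : Subfield F) (hKK' : K ≤ K') (hKL : K ≤ L)
    (hdef : VsDefectless v (K : Set F) (L : Set F))
    (hΓ : ValueGroupSet v (L : Set F) ∩ ValueGroupSet v (K' : Set F)
        = ValueGroupSet v (K : Set F))
    (hres : ∀ (n : ℕ) (x : Fin n → ResField v),
        (∀ i, x i ∈ ResidueSet v (L : Set F)) →
        LinIndepOver (ResidueSet v (K : Set F)) x →
        LinIndepOver (ResidueSet v (K' : Set F)) x) :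
    ResidueSet v ((L ⊔ K' : Subfield F) : Set F)
      = (Subfield.closure (ResidueSet v (L : Set F) ∪ ResidueSet v (K' : Set F)) :
          Subfield (ResField v)) := by
  letI : OrderBot Γ₀ := { bot := 0, bot_le := fun _ => zero_le' }
  apply Set.Subset.antisymm
  · rintro y ⟨X, hX, rfl⟩
    obtain ⟨f, hf, g, hg, hg0, hfg⟩ :=
      mem_quotSpan_of_sup K' L (by exact_mod_cast hX)
    obtain ⟨nf, a, t, ha, ht, rfl⟩ := hf
    obtain ⟨ng, cg, d, hcg, hd, rfl⟩ := hg
    set T : Fin (nf + ng) → F := Fin.append t d with hTdef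
    have hTL : ∀ i, T i ∈ (L : Set F) := by
      intro i
      refine Fin.addCases (fun j => ?_) (fun j => ?_) i <;>
        simp [hTdef, Fin.append_left, Fin.append_right, ht, hd]
    obtain ⟨p, b, hbK, hbLin, hbspan⟩ := hdef (nf + ng) T hTL
    have hrangeT : Set.range T ⊆ (L : Set F) := by rintro _ ⟨i, rfl⟩; exact hTL i
    have hbL : ∀ k, b k ∈ L := by
      intro k
      have hk : b k ∈ SpanOver (K : Set F) (Set.range b) :=
        mem_spanOver_of_mem (one_mem K) ⟨k, rfl⟩
      rw [hbspan] at hk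
      exact spanOver_subset L (fun z hz => hKL hz) hrangeT hk
    have htspan : ∀ i, t i ∈ SpanOver (K : Set F) (Set.range b) := fun i => by
      rw [hbspan]
      exact mem_spanOver_of_mem (one_mem K) ⟨Fin.castAdd ng i, by simp [hTdef, Fin.append_left]⟩
    have hdspan : ∀ j, d j ∈ SpanOver (K : Set F) (Set.range b) := fun j => by
      rw [hbspan]
      exact mem_spanOver_of_mem (one_mem K) ⟨Fin.natAdd nf j, by simp [hTdef, Fin.append_right]⟩
    choose coefT hcoefTK hcoefTeq using fun i => spanOver_range_repr K b (htspan i)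
    choose coefD hcoefDK hcoefDeq using fun j => spanOver_range_repr K b (hdspan j)
    set A : Fin p → F := fun k => ∑ i, a i * coefT i k with hA
    set C : Fin p → F := fun k => ∑ j, cg j * coefD j k with hC
    have hAK' : ∀ k, A k ∈ (K' : Set F) := fun k => by
      simp only [SetLike.mem_coe, hA]
      exact sum_mem fun i _ => mul_mem (ha i) (hKK' (hcoefTK i k))
    have hCK' : ∀ k, C k ∈ (K' : Set F) := fun k => by
      simp only [SetLike.mem_coe, hC]
      exact sum_mem fun j _ => mul_mem (hcg j) (hKK' (hcoefDK j k))
    have hfA : ∑ i, a i * t i = ∑ k, A k * b k := by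
      rw [Finset.sum_congr rfl fun i (_ : i ∈ Finset.univ) => by
        rw [hcoefTeq i, Finset.mul_sum]]
      rw [Finset.sum_comm]
      refine Finset.sum_congr rfl fun k _ => ?_
      simp only [hA]
      rw [Finset.sum_mul]
      exact Finset.sum_congr rfl fun i _ => by ring
    have hgC : ∑ j, cg j * d j = ∑ k, C k * b k := by
      rw [Finset.sum_congr rfl fun j (_ : j ∈ Finset.univ) => by
        rw [hcoefDeq j, Finset.mul_sum]]
      rw [Finset.sum_comm]
      refine Finset.sum_congr rfl fun k _ => ?_
      simp only [hC]
      rw [Finset.sum_mul]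
      exact Finset.sum_congr rfl fun j _ => by ring
    have hbK' : ValIndep v (K' : Set F) b :=
      valIndep_extend v K K' L hKK' hKL hΓ hres b hbL hbK
    rw [hfA] at hfg
    rw [hgC] at hfg hg0
    set M := Finset.univ.sup (fun k => v (C k * b k)) with hM
    have hvg : v (∑ k, C k * b k) = M := hbK' C hCK'
    have hM0 : M ≠ 0 := by rw [← hvg]; exact v.ne_zero_iff.2 hg0
    have hne : (Finset.univ : Finset (Fin p)).Nonempty := by
      by_contra hemp
      rw [Finset.not_nonempty_iff_eq_empty] at hemp
      exact hM0 (by rw [hM, hemp, Finset.sup_empty]; rfl)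
    obtain ⟨j₀, -, hj₀⟩ := Finset.exists_mem_eq_sup Finset.univ hne (fun k => v (C k * b k))
    have hcbM : v (C j₀ * b j₀) = M := by rw [hM, hj₀]
    have hcb0 : C j₀ * b j₀ ≠ 0 := v.ne_zero_iff.1 (hcbM ▸ hM0)
    have hC0 : C j₀ ≠ 0 := fun hh => hcb0 (by simp [hh])
    have hb0 : b j₀ ≠ 0 := fun hh => hcb0 (by simp [hh])
    have hvf_le : v (∑ k, A k * b k) ≤ M := by
      rw [← hfg, v.map_mul]
      calc v (X : F) * v (∑ k, C k * b k) ≤ 1 * M := mul_le_mul' X.2 (le_of_eq hvg)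
        _ = M := one_mul M
    have hvA : v (∑ k, A k * b k) = Finset.univ.sup (fun k => v (A k * b k)) := hbK' A hAK'
    have hleA : ∀ k, v (A k * b k) ≤ v (C j₀ * b j₀) := by
      intro k
      rw [hcbM]
      refine le_trans ?_ hvf_le
      rw [hvA]
      exact Finset.le_sup (f := fun k => v (A k * b k)) (Finset.mem_univ k)
    have hleC : ∀ k, v (C k * b k) ≤ v (C j₀ * b j₀) := fun k => by
      rw [hcbM, hM]
      exact Finset.le_sup (f := fun k => v (C k * b k)) (Finset.mem_univ k)
    have hnum_le : v ((∑ k, A k * b k) / (C j₀ * b j₀)) ≤ 1 := by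
      rw [map_div₀]
      exact div_le_one_of_le (by rw [hcbM]; exact hvf_le) (v.ne_zero_iff.2 hcb0)
    have hden_eq : v ((∑ k, C k * b k) / (C j₀ * b j₀)) = 1 := by
      rw [map_div₀, hvg, ← hcbM, div_self (v.ne_zero_iff.2 hcb0)]
    set Num : v.valuationSubring := ⟨(∑ k, A k * b k) / (C j₀ * b j₀), hnum_le⟩ with hNum
    set Den : v.valuationSubring := ⟨(∑ k, C k * b k) / (C j₀ * b j₀), le_of_eq hden_eq⟩
      with hDen
    have hNmem := res_quot_mem v K K' L hKK' hKL hΓ b hbL A hAK'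
      (hCK' j₀) (hbL j₀) hC0 hb0 hleA hnum_le
    have hDmem := res_quot_mem v K K' L hKK' hKL hΓ b hbL C hCK'
      (hCK' j₀) (hbL j₀) hC0 hb0 hleC (le_of_eq hden_eq)
    have hD0 : IsLocalRing.residue _ Den ≠ 0 := by
      rw [Ne, residue_zero_iff]
      simp only [hDen]
      rw [hden_eq]
      exact lt_irrefl 1
    have hXDN : X * Den = Num := by
      ext
      push_cast
      rw [← mul_div_assoc, hfg]
    have hmul : IsLocalRing.residue _ X * IsLocalRing.residue _ Den
        = IsLocalRing.residue _ Num := by rw [← map_mul, hXDN]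
    have : IsLocalRing.residue _ X
        = IsLocalRing.residue _ Num / IsLocalRing.residue _ Den :=
      (eq_div_iff hD0).2 hmul
    rw [SetLike.mem_coe, this]
    exact div_mem hNmem hDmem
  · intro y hy
    have hle : Subfield.closure (ResidueSet v (L : Set F) ∪ ResidueSet v (K' : Set F))
        ≤ residueSubfield v (L ⊔ K') := by
      rw [Subfield.closure_le]
      refine Set.union_subset ?_ ?_
      · exact (residueSet_mono v (by exact_mod_cast le_sup_left (a := L) (b := K')))
      · exact (residueSet_mono v (by exact_mod_cast le_sup_right (a := L) (b := K')))
    exact hle hy
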